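/- Let h be a nondegenerate metric field on U and let C be a smooth cubic field on U that is totally symmetric. Then there exist unique smooth Christoffel maps Γ and Γ* on U such that for all x ∈ U and v, w, u ∈ ℝⁿ: h x (Γ x v w) u = (1/2)( (fderiv ℝ h x v) w u + (fderiv ℝ h x w) v u − (fderiv ℝ h x u) v w ) − (1/2) C x v w u, and h x (Γ* x v w) u = (1/2)( (fderiv ℝ h x v) w u + (fderiv ℝ h x w) v u − (fderiv ℝ h x u) v w ) + (1/2) C x v w u. Moreover Γ and Γ* are torsion-free, mutually dual with respect to h, and ∇h (formed with Γ) equals C. (Paper's Proposition 2.3, in coordinates.) -/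

import Mathlib

set_option synthInstance.maxHeartbeats 1000000
set_option maxHeartbeats 4000000

noncomputable section

open Set

/-- ℝⁿ. -/
abbrev Vn (n : ℕ) : Type := Fin n → ℝ

/-- Bilinear forms on ℝⁿ (as continuous linear maps). -/
abbrev Biln (n : ℕ) : Type := Vn n →L[ℝ] Vn n →L[ℝ] ℝ

/-- Christoffel maps (values of a connection). -/
abbrev Chrn (n : ℕ) : Type := Vn n →L[ℝ] Vn n →L[ℝ] Vn n

/-- The cubic field `∇h` formed from a metric field `h` and a Christoffel map `Γ`. -/
def nablaH {n : ℕ} (h : Vn n → Biln n) (Γ : Vn n → Chrn n) (x v w u : Vn n) : ℝ :=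
  fderiv ℝ h x v w u - h x (Γ x v w) u - h x w (Γ x v u)

/-- Cubic fields: smooth families of trilinear forms. -/
abbrev Cubn (n : ℕ) : Type := Vn n →L[ℝ] Vn n →L[ℝ] Vn n →L[ℝ] ℝ

noncomputable instance (n : ℕ) : NormedAddCommGroup (Cubn n) :=
  ContinuousLinearMap.toNormedAddCommGroup (𝕜 := ℝ) (𝕜₂ := ℝ)
    (E := Vn n) (F := Vn n →L[ℝ] Vn n →L[ℝ] ℝ) (σ₁₂ := RingHom.id ℝ)

noncomputable instance (n : ℕ) : NormedSpace ℝ (Cubn n) :=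
  ContinuousLinearMap.toNormedSpace (𝕜 := ℝ) (𝕜₂ := ℝ)
    (E := Vn n) (F := Vn n →L[ℝ] Vn n →L[ℝ] ℝ) (σ₁₂ := RingHom.id ℝ)

namespace P23

open ContinuousLinearMap

def flipB (n : ℕ) : Biln n →L[ℝ] Biln n :=
  ↑(flipₗᵢ ℝ (Vn n) (Vn n) ℝ).toContinuousLinearEquiv

def flipC (n : ℕ) : Cubn n →L[ℝ] Cubn n :=
  ↑(flipₗᵢ ℝ (Vn n) (Vn n) (Vn n →L[ℝ] ℝ)).toContinuousLinearEquiv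

lemma flipC_apply (n : ℕ) (T : Cubn n) (v w u : Vn n) : flipC n T v w u = T w v u := rfl

def perm3 (n : ℕ) : Cubn n →L[ℝ] Cubn n :=
  (compL ℝ (Vn n) (Biln n) (Biln n) (flipB n)).comp (flipC n)

lemma perm3_apply (n : ℕ) (T : Cubn n) (v w u : Vn n) : perm3 n T v w u = T u v w := rfl

def eb (n : ℕ) (j : Fin n) : Vn n := Pi.single j 1

def psi (n : ℕ) : (Vn n →L[ℝ] ℝ) →L[ℝ] Vn n :=
  ContinuousLinearMap.pi fun j => ContinuousLinearMap.apply ℝ ℝ (eb n j)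

lemma psi_apply (n : ℕ) (φ : Vn n →L[ℝ] ℝ) (j : Fin n) : psi n φ j = φ (eb n j) := rfl

lemma eval_eq_sum (n : ℕ) (φ : Vn n →L[ℝ] ℝ) (u : Vn n) :
    φ u = ∑ j, u j * φ (eb n j) := by
  have hu : u = ∑ j, u j • eb n j := by
    funext k
    simp [eb, Finset.sum_apply, Pi.single_apply]
  conv_lhs => rw [hu]
  simp [smul_eq_mul]

lemma cub_add_apply {n : ℕ} (D E : Cubn n) (v : Vn n) : (D + E) v = D v + E v := rfl
lemma cub_sub_apply {n : ℕ} (D E : Cubn n) (v : Vn n) : (D - E) v = D v - E v := rfl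
lemma cub_smul_apply {n : ℕ} (c : ℝ) (D : Cubn n) (v : Vn n) : (c • D) v = c • (D v) := rfl

/-- the "lowered-index" cubic form appearing on the right-hand sides. -/
def FF {n : ℕ} (D Cx : Cubn n) (ε : ℝ) : Cubn n :=
  ((1:ℝ)/2) • (D + flipC n D - perm3 n D) + (ε/2) • Cx

lemma FF_apply {n : ℕ} (D Cx : Cubn n) (ε : ℝ) (v w u : Vn n) :
    FF D Cx ε v w u
      = ((1:ℝ)/2) * (D v w u + D w v u - D u v w) + (ε/2) * Cx v w u := by
  simp [FF, cub_add_apply, cub_sub_apply, cub_smul_apply, flipC_apply, perm3_apply,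
    ContinuousLinearMap.add_apply, ContinuousLinearMap.sub_apply,
    ContinuousLinearMap.smul_apply, smul_eq_mul]

/-- build a Christoffel map from an "index-raising" map `A` and a cubic form `T`. -/
def mkChr {n : ℕ} (A : (Vn n →L[ℝ] ℝ) →L[ℝ] Vn n) (T : Cubn n) : Chrn n :=
  (compL ℝ (Vn n) (Biln n) (Vn n →L[ℝ] Vn n))
    ((compL ℝ (Vn n) (Vn n →L[ℝ] ℝ) (Vn n)) A) T

lemma mkChr_apply {n : ℕ} (A : (Vn n →L[ℝ] ℝ) →L[ℝ] Vn n) (T : Cubn n) (v w : Vn n) :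
    mkChr A T v w = A (T v w) := rfl

end P23

theorem statement3 {n : ℕ} (hn : 1 ≤ n) (U : Set (Vn n)) (hUopen : IsOpen U)
    (h : Vn n → Biln n) (hsmooth : ContDiffOn ℝ (⊤ : ℕ∞) h U)
    (hsymm : ∀ x ∈ U, ∀ v w : Vn n, h x v w = h x w v)
    (hnondeg : ∀ x ∈ U, ∀ v : Vn n, (∀ w : Vn n, h x v w = 0) → v = 0)
    (C : Vn n → Cubn n) (hCsmooth : ContDiffOn ℝ (⊤ : ℕ∞) C U)
    (hCsymm : ∀ x ∈ U, ∀ v w u : Vn n,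
        C x v w u = C x w v u ∧ C x v w u = C x v u w) :
    ∃ Γ Γs : Vn n → Chrn n,
      ContDiffOn ℝ (⊤ : ℕ∞) Γ U ∧ ContDiffOn ℝ (⊤ : ℕ∞) Γs U ∧
      -- the defining formula for Γ …
      (∀ x ∈ U, ∀ v w u : Vn n,
          h x (Γ x v w) u
            = ((1:ℝ)/2) * (fderiv ℝ h x v w u + fderiv ℝ h x w v u
                - fderiv ℝ h x u v w)
              - ((1:ℝ)/2) * C x v w u) ∧
      -- … and for Γ*
      (∀ x ∈ U, ∀ v w u : Vn n,
          h x (Γs x v w) u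
            = ((1:ℝ)/2) * (fderiv ℝ h x v w u + fderiv ℝ h x w v u
                - fderiv ℝ h x u v w)
              + ((1:ℝ)/2) * C x v w u) ∧
      -- Γ and Γ* are torsion-free
      (∀ x ∈ U, ∀ v w : Vn n, Γ x v w = Γ x w v) ∧
      (∀ x ∈ U, ∀ v w : Vn n, Γs x v w = Γs x w v) ∧
      -- mutually dual with respect to h
      (∀ x ∈ U, ∀ v w u : Vn n,
          fderiv ℝ h x v w u = h x (Γ x v w) u + h x w (Γs x v u)) ∧
      -- ∇h (formed with Γ) equals C
      (∀ x ∈ U, ∀ v w u : Vn n, nablaH h Γ x v w u = C x v w u) ∧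
      -- uniqueness: any Christoffel maps satisfying the defining formulas agree
      -- with Γ and Γ* on U
      (∀ Γ' Γs' : Vn n → Chrn n,
          (∀ x ∈ U, ∀ v w u : Vn n,
              h x (Γ' x v w) u
                = ((1:ℝ)/2) * (fderiv ℝ h x v w u + fderiv ℝ h x w v u
                    - fderiv ℝ h x u v w)
                  - ((1:ℝ)/2) * C x v w u) →
          (∀ x ∈ U, ∀ v w u : Vn n,
              h x (Γs' x v w) u
                = ((1:ℝ)/2) * (fderiv ℝ h x v w u + fderiv ℝ h x w v u
                    - fderiv ℝ h x u v w)
                  + ((1:ℝ)/2) * C x v w u) →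
          ∀ x ∈ U, ∀ v w : Vn n, Γ' x v w = Γ x v w ∧ Γs' x v w = Γs x v w) := by
  classical
  have hC12 : ∀ x ∈ U, ∀ v w u : Vn n, C x v w u = C x w v u :=
    fun x hx v w u => (hCsymm x hx v w u).1
  have hC23 : ∀ x ∈ U, ∀ v w u : Vn n, C x v w u = C x v u w :=
    fun x hx v w u => (hCsymm x hx v w u).2
  -- differentiability facts
  have hdiffat : ∀ x ∈ U, HasFDerivAt h (fderiv ℝ h x) x := fun x hx =>
    ((hsmooth.contDiffAt (hUopen.mem_nhds hx)).differentiableAt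
      (by simp)).hasFDerivAt
  have hD : ContDiffOn ℝ (⊤ : ℕ∞) (fun x => fderiv ℝ h x) U :=
    hsmooth.fderiv_of_isOpen hUopen (le_of_eq (by rfl))
  -- symmetry of the fderiv in its last two arguments
  have hDsym : ∀ x ∈ U, ∀ a v w : Vn n,
      fderiv ℝ h x a v w = fderiv ℝ h x a w v := by
    intro x hx a v w
    let ev : Vn n → Vn n → (Biln n →L[ℝ] ℝ) := fun v w =>
      (ContinuousLinearMap.apply ℝ ℝ w).comp
        (ContinuousLinearMap.apply ℝ (Vn n →L[ℝ] ℝ) v)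
    have hd : ∀ v w : Vn n,
        HasFDerivAt (fun y => h y v w) ((ev v w).comp (fderiv ℝ h x)) x := by
      intro v w
      have hc := ((hdiffat x hx).clm_apply (hasFDerivAt_const v x)).clm_apply (hasFDerivAt_const w x)
      refine hc.congr_fderiv ?_
      ext a
      simp [ev]
    have hev : (fun y => h y v w - h y w v) =ᶠ[nhds x] (fun _ => (0:ℝ)) := by
      filter_upwards [hUopen.mem_nhds hx] with y hy
      simp [hsymm y hy v w]
    have hz : HasFDerivAt (fun y => h y v w - h y w v)
        (((ev v w).comp (fderiv ℝ h x)) - ((ev w v).comp (fderiv ℝ h x))) x :=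
      (hd v w).sub (hd w v)
    have h0 : HasFDerivAt (fun _ : Vn n => (0:ℝ)) (0 : Vn n →L[ℝ] ℝ) x :=
      hasFDerivAt_const 0 x
    have hL := (h0.congr_of_eventuallyEq hev).unique hz
    have := congrArg (fun (L : Vn n →L[ℝ] ℝ) => L a) hL.symm
    simpa [ev, sub_eq_zero] using this
  -- the coordinate map associated with h
  set Tm : Vn n → (Vn n →L[ℝ] Vn n) :=
    fun x => (P23.psi n).comp (h x) with hTmdef
  have hTmval : ∀ x w j, Tm x w j = h x w (P23.eb n j) := fun x w j => rfl
  have hTm : ContDiffOn ℝ (⊤ : ℕ∞) Tm U := by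
    rw [contDiffOn_clm_apply]
    intro w
    have h1 : ContDiffOn ℝ (⊤ : ℕ∞) (fun x => h x w) U :=
      hsmooth.clm_apply contDiffOn_const
    have h2 : ContDiffOn ℝ (⊤ : ℕ∞) (fun x => P23.psi n (h x w)) U :=
      contDiffOn_const.clm_apply h1
    exact h2.congr fun x _ => rfl
  -- Tm x is a unit for x ∈ U
  have hTbij : ∀ x ∈ U, Function.Bijective (Tm x) := by
    intro x hx
    have hinj : Function.Injective (Tm x) := by
      rw [injective_iff_map_eq_zero]
      intro w hw
      apply hnondeg x hx w
      intro u
      have hj : ∀ j, h x w (P23.eb n j) = 0 := by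
        intro j
        have := congrFun hw j
        simpa [hTmval] using this
      rw [P23.eval_eq_sum n (h x w) u]
      simp [hj]
    refine ⟨hinj, ?_⟩
    exact (LinearMap.injective_iff_surjective
      (f := ((Tm x) : Vn n →ₗ[ℝ] Vn n))).1 hinj
  have hUnit : ∀ x ∈ U, ∃ u : (Vn n →L[ℝ] Vn n)ˣ, (u : Vn n →L[ℝ] Vn n) = Tm x := by
    intro x hx
    let e := (LinearEquiv.ofBijective ((Tm x) : Vn n →ₗ[ℝ] Vn n)
      (hTbij x hx)).toContinuousLinearEquiv
    have hecoe : ∀ z, e z = Tm x z := fun z => rfl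
    refine ⟨⟨Tm x, (e.symm : Vn n →L[ℝ] Vn n), ?_, ?_⟩, rfl⟩
    · refine ContinuousLinearMap.ext fun y => ?_
      simp only [ContinuousLinearMap.mul_apply, ContinuousLinearMap.one_apply,
        ContinuousLinearEquiv.coe_coe]
      rw [← hecoe]
      exact e.apply_symm_apply y
    · refine ContinuousLinearMap.ext fun y => ?_
      simp only [ContinuousLinearMap.mul_apply, ContinuousLinearMap.one_apply,
        ContinuousLinearEquiv.coe_coe]
      rw [← hecoe]
      exact e.symm_apply_apply y
  -- the inverse map
  set S : Vn n → (Vn n →L[ℝ] Vn n) := fun x => Ring.inverse (Tm x) with hSdef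
  have hS : ContDiffOn ℝ (⊤ : ℕ∞) S U := by
    intro x hx
    obtain ⟨u, hu⟩ := hUnit x hx
    have h1 : ContDiffAt ℝ (⊤ : ℕ∞) (Ring.inverse :
        (Vn n →L[ℝ] Vn n) → (Vn n →L[ℝ] Vn n)) (Tm x) := by
      rw [← hu]
      exact contDiffAt_ringInverse ℝ u
    exact (h1.comp x (hTm.contDiffAt (hUopen.mem_nhds hx))).contDiffWithinAt
  have hTS : ∀ x ∈ U, ∀ y, Tm x (S x y) = y := by
    intro x hx y
    obtain ⟨u, hu⟩ := hUnit x hx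
    have hSu : S x = ((u⁻¹ : (Vn n →L[ℝ] Vn n)ˣ) : Vn n →L[ℝ] Vn n) := by
      show Ring.inverse (Tm x) = _
      rw [← hu, Ring.inverse_unit]
    rw [hSu, ← hu, ← ContinuousLinearMap.mul_apply, u.mul_inv,
      ContinuousLinearMap.one_apply]
  -- the master identity
  have hmaster : ∀ x ∈ U, ∀ (φ : Vn n →L[ℝ] ℝ) (u : Vn n),
      h x (S x (P23.psi n φ)) u = φ u := by
    intro x hx φ u
    have h1 : Tm x (S x (P23.psi n φ)) = P23.psi n φ := hTS x hx _
    have hj : ∀ j, h x (S x (P23.psi n φ)) (P23.eb n j) = φ (P23.eb n j) := by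
      intro j
      have h2 := congrFun h1 j
      rw [hTmval] at h2
      rw [h2, P23.psi_apply]
    rw [P23.eval_eq_sum n (h x (S x (P23.psi n φ))) u, P23.eval_eq_sum n φ u]
    simp only [hj]
  -- the candidate Christoffel maps
  set F : Vn n → Cubn n := fun x => P23.FF (fderiv ℝ h x) (C x) (-1) with hFdef
  set Fs : Vn n → Cubn n := fun x => P23.FF (fderiv ℝ h x) (C x) 1 with hFsdef
  have hFsm : ∀ ε : ℝ, ∀ v w : Vn n, ContDiffOn ℝ (⊤ : ℕ∞)
      (fun x => P23.FF (fderiv ℝ h x) (C x) ε v w) U := by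
    intro ε v w
    have hflip : ContDiffOn ℝ (⊤ : ℕ∞) (fun x => P23.flipC n (fderiv ℝ h x)) U :=
      contDiffOn_const.clm_apply hD
    have hperm : ContDiffOn ℝ (⊤ : ℕ∞) (fun x => P23.perm3 n (fderiv ℝ h x)) U :=
      contDiffOn_const.clm_apply hD
    have t1 : ContDiffOn ℝ (⊤ : ℕ∞) (fun x => fderiv ℝ h x v w) U :=
      (hD.clm_apply contDiffOn_const).clm_apply contDiffOn_const
    have t2 : ContDiffOn ℝ (⊤ : ℕ∞) (fun x => P23.flipC n (fderiv ℝ h x) v w) U :=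
      (hflip.clm_apply contDiffOn_const).clm_apply contDiffOn_const
    have t3 : ContDiffOn ℝ (⊤ : ℕ∞) (fun x => P23.perm3 n (fderiv ℝ h x) v w) U :=
      (hperm.clm_apply contDiffOn_const).clm_apply contDiffOn_const
    have t4 : ContDiffOn ℝ (⊤ : ℕ∞) (fun x => C x v w) U :=
      (hCsmooth.clm_apply contDiffOn_const).clm_apply contDiffOn_const
    have hcomb : ContDiffOn ℝ (⊤ : ℕ∞) (fun x =>
        ((1:ℝ)/2) • (fderiv ℝ h x v w + P23.flipC n (fderiv ℝ h x) v w
          - P23.perm3 n (fderiv ℝ h x) v w) + (ε/2) • (C x v w)) U :=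
      (((t1.add t2).sub t3).const_smul ((1:ℝ)/2)).add (t4.const_smul (ε/2))
    exact hcomb.congr fun x _ => rfl
  set Γ : Vn n → Chrn n := fun x => P23.mkChr ((S x).comp (P23.psi n)) (F x) with hΓdef
  set Γs : Vn n → Chrn n := fun x => P23.mkChr ((S x).comp (P23.psi n)) (Fs x) with hΓsdef
  have hΓval : ∀ x ∈ U, ∀ v w u : Vn n, h x (Γ x v w) u = F x v w u := by
    intro x hx v w u
    have h1 : Γ x v w = S x (P23.psi n (F x v w)) := rfl
    rw [h1]
    exact hmaster x hx (F x v w) u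
  have hΓsval : ∀ x ∈ U, ∀ v w u : Vn n, h x (Γs x v w) u = Fs x v w u := by
    intro x hx v w u
    have h1 : Γs x v w = S x (P23.psi n (Fs x v w)) := rfl
    rw [h1]
    exact hmaster x hx (Fs x v w) u
  -- smoothness of the constructed maps
  have hmk : ∀ (G : Vn n → Cubn n),
      (∀ v w : Vn n, ContDiffOn ℝ (⊤ : ℕ∞) (fun x => G x v w) U) →
      ContDiffOn ℝ (⊤ : ℕ∞) (fun x => P23.mkChr ((S x).comp (P23.psi n)) (G x)) U := by
    intro G hG
    rw [contDiffOn_clm_apply]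
    intro v
    rw [contDiffOn_clm_apply]
    intro w
    have h1 : ContDiffOn ℝ (⊤ : ℕ∞) (fun x => P23.psi n (G x v w)) U :=
      contDiffOn_const.clm_apply (hG v w)
    have h2 : ContDiffOn ℝ (⊤ : ℕ∞) (fun x => S x (P23.psi n (G x v w))) U :=
      hS.clm_apply h1
    exact h2.congr fun x _ => rfl
  have hΓsm : ContDiffOn ℝ (⊤ : ℕ∞) Γ U := hmk F (hFsm (-1))
  have hΓssm : ContDiffOn ℝ (⊤ : ℕ∞) Γs U := hmk Fs (hFsm 1)
  -- the defining formulas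
  have hΓform : ∀ x ∈ U, ∀ v w u : Vn n,
      h x (Γ x v w) u
        = ((1:ℝ)/2) * (fderiv ℝ h x v w u + fderiv ℝ h x w v u
            - fderiv ℝ h x u v w) - ((1:ℝ)/2) * C x v w u := by
    intro x hx v w u
    rw [hΓval x hx v w u]
    have h1 : F x v w u = P23.FF (fderiv ℝ h x) (C x) (-1) v w u := rfl
    rw [h1, P23.FF_apply]
    ring
  have hΓsform : ∀ x ∈ U, ∀ v w u : Vn n,
      h x (Γs x v w) u
        = ((1:ℝ)/2) * (fderiv ℝ h x v w u + fderiv ℝ h x w v u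
            - fderiv ℝ h x u v w) + ((1:ℝ)/2) * C x v w u := by
    intro x hx v w u
    rw [hΓsval x hx v w u]
    have h1 : Fs x v w u = P23.FF (fderiv ℝ h x) (C x) 1 v w u := rfl
    rw [h1, P23.FF_apply]
  -- cancellation from nondegeneracy
  have hcancel : ∀ x ∈ U, ∀ a b : Vn n, (∀ u, h x a u = h x b u) → a = b := by
    intro x hx a b hab
    have h0 : ∀ u, h x (a - b) u = 0 := by
      intro u
      rw [map_sub, ContinuousLinearMap.sub_apply, hab u, sub_self]
    exact sub_eq_zero.mp (hnondeg x hx _ h0)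
  refine ⟨Γ, Γs, hΓsm, hΓssm, hΓform, hΓsform, ?_, ?_, ?_, ?_, ?_⟩
  · -- Γ torsion-free
    intro x hx v w
    apply hcancel x hx
    intro u
    rw [hΓform x hx v w u, hΓform x hx w v u, hDsym x hx u v w, hC12 x hx v w u]
    ring
  · -- Γs torsion-free
    intro x hx v w
    apply hcancel x hx
    intro u
    rw [hΓsform x hx v w u, hΓsform x hx w v u, hDsym x hx u v w, hC12 x hx v w u]
    ring
  · -- duality
    intro x hx v w u
    rw [hΓform x hx v w u, hsymm x hx w (Γs x v u), hΓsform x hx v u w]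
    have e1 := hDsym x hx v w u
    have e2 := hC23 x hx v w u
    linarith
  · -- ∇h = C
    intro x hx v w u
    have e0 : nablaH h Γ x v w u
        = fderiv ℝ h x v w u - h x (Γ x v w) u - h x w (Γ x v u) := rfl
    rw [e0, hΓform x hx v w u, hsymm x hx w (Γ x v u), hΓform x hx v u w]
    have e1 := hDsym x hx v w u
    have e2 := hC23 x hx v w u
    linarith
  · -- uniqueness
    intro Γ' Γs' h1 h2 x hx v w
    constructor
    · apply hcancel x hx
      intro u
      rw [h1 x hx v w u, hΓform x hx v w u]
    · apply hcancel x hx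
      intro u
      rw [h2 x hx v w u, hΓsform x hx v w u]
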